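/- Let k, ℓ be nonzero integers, R > 0, α : (0, π/2) → ℝ differentiable, and fix s ∈ (0, π/2). Define Φ : ℝ³ → ℝ³ by Φ(x₁, x₂, σ) = (cos α(σ), sin α(σ)·cos(k x₁ + ℓ x₂), sin α(σ)·sin(k x₁ + ℓ x₂)), and let G be the 3×3 Gram matrix with entries G_{ij} = ⟨u_i, u_j⟩ for the Euclidean inner product, where u₁ = (1/(R cos s))·∂Φ/∂x₁, u₂ = (1/(R sin s))·∂Φ/∂x₂, u₃ = (1/R)·∂Φ/∂σ, all evaluated at any point with σ = s. Then: (i) the vector e₃ = ((cos s)/k, −(sin s)/ℓ, 0) satisfies G·e₃ = 0; (ii) the vector e₁ = (0, 0, 1) is an eigenvector of G with eigenvalue λ₁² = α′(s)²/R²; (iii) the vector e₂ = ((sin s)/ℓ, (cos s)/k, 0) is an eigenvector of G with eigenvalue λ₂² = (sin²α(s)/R²)·(k²·sin²s + ℓ²·cos²s)/(sin²s·cos²s). -/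
import Mathlib

set_option maxHeartbeats 1000000


open Real Set

/-- For the α-Hopf ansatz map
`Φ(x₁, x₂, σ) = (cos α(σ), sin α(σ)·cos(kx₁ + lx₂), sin α(σ)·sin(kx₁ + lx₂))` and the
Gram matrix `G` of the vectors `u₁ = (1/(R cos s))·∂Φ/∂x₁`, `u₂ = (1/(R sin s))·∂Φ/∂x₂`,
`u₃ = (1/R)·∂Φ/∂σ` at `σ = s`: (i) `e₃ = (cos s/k, −sin s/l, 0)` satisfies `G·e₃ = 0`;
(ii) `e₁ = (0,0,1)` is an eigenvector with eigenvalue `λ₁² = α'(s)²/R²`;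
(iii) `e₂ = (sin s/l, cos s/k, 0)` is an eigenvector with eigenvalue
`λ₂² = (sin²α(s)/R²)·(k²sin²s + l²cos²s)/(sin²s·cos²s)`. -/
theorem stmt_12 (k l : ℤ) (hk : k ≠ 0) (hl : l ≠ 0) (R : ℝ) (hR : 0 < R)
    (α : ℝ → ℝ) (hα : DifferentiableOn ℝ α (Ioo 0 (π/2)))
    (s : ℝ) (hs : s ∈ Ioo 0 (π/2)) (x₁ x₂ : ℝ)
    (Φ : ℝ → ℝ → ℝ → Fin 3 → ℝ)
    (hΦ : Φ = fun a b σ => ![cos (α σ),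
      sin (α σ) * cos ((k : ℝ) * a + (l : ℝ) * b),
      sin (α σ) * sin ((k : ℝ) * a + (l : ℝ) * b)])
    (u : Fin 3 → Fin 3 → ℝ)
    (hu : u = ![fun i => (1 / (R * cos s)) * deriv (fun a => Φ a x₂ s i) x₁,
                fun i => (1 / (R * sin s)) * deriv (fun b => Φ x₁ b s i) x₂,
                fun i => (1 / R) * deriv (fun σ => Φ x₁ x₂ σ i) s])
    (G : Matrix (Fin 3) (Fin 3) ℝ)
    (hG : G = fun i j => ∑ m, u i m * u j m) :
    G.mulVec ![cos s / (k : ℝ), -(sin s / (l : ℝ)), 0] = 0 ∧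
    G.mulVec ![0, 0, 1] = ((deriv α s)^2 / R^2) • ![0, 0, 1] ∧
    G.mulVec ![sin s / (l : ℝ), cos s / (k : ℝ), 0]
      = ((sin (α s)^2 / R^2) * ((k : ℝ)^2 * sin s ^ 2 + (l : ℝ)^2 * cos s ^ 2)
          / (sin s ^ 2 * cos s ^ 2)) • ![sin s / (l : ℝ), cos s / (k : ℝ), 0] := by
  obtain ⟨hs0, hs2⟩ := hs
  have hπ := pi_pos
  have hsin : (0:ℝ) < sin s := sin_pos_of_pos_of_lt_pi hs0 (by linarith)
  have hcos : (0:ℝ) < cos s := cos_pos_of_mem_Ioo ⟨by linarith, hs2⟩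
  have hk' : (k:ℝ) ≠ 0 := Int.cast_ne_zero.mpr hk
  have hl' : (l:ℝ) ≠ 0 := Int.cast_ne_zero.mpr hl
  have hαs : HasDerivAt α (deriv α s) s :=
    (hα.differentiableAt (isOpen_Ioo.mem_nhds ⟨hs0, hs2⟩)).hasDerivAt
  have hA : HasDerivAt (fun a : ℝ => (k:ℝ)*a + (l:ℝ)*x₂) (k:ℝ) x₁ := by
    simpa using ((hasDerivAt_id x₁).const_mul (k:ℝ)).add_const ((l:ℝ)*x₂)
  have hB : HasDerivAt (fun b : ℝ => (k:ℝ)*x₁ + (l:ℝ)*b) (l:ℝ) x₂ := by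
    simpa using ((hasDerivAt_id x₂).const_mul (l:ℝ)).const_add ((k:ℝ)*x₁)
  have d10 : deriv (fun a : ℝ => sin (α s) * cos ((k:ℝ)*a + (l:ℝ)*x₂)) x₁
      = sin (α s) * (-sin ((k:ℝ)*x₁ + (l:ℝ)*x₂) * (k:ℝ)) :=
    ((hA.cos).const_mul (sin (α s))).deriv
  have d11 : deriv (fun a : ℝ => sin (α s) * sin ((k:ℝ)*a + (l:ℝ)*x₂)) x₁
      = sin (α s) * (cos ((k:ℝ)*x₁ + (l:ℝ)*x₂) * (k:ℝ)) :=
    ((hA.sin).const_mul (sin (α s))).deriv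
  have d20 : deriv (fun b : ℝ => sin (α s) * cos ((k:ℝ)*x₁ + (l:ℝ)*b)) x₂
      = sin (α s) * (-sin ((k:ℝ)*x₁ + (l:ℝ)*x₂) * (l:ℝ)) :=
    ((hB.cos).const_mul (sin (α s))).deriv
  have d21 : deriv (fun b : ℝ => sin (α s) * sin ((k:ℝ)*x₁ + (l:ℝ)*b)) x₂
      = sin (α s) * (cos ((k:ℝ)*x₁ + (l:ℝ)*x₂) * (l:ℝ)) :=
    ((hB.sin).const_mul (sin (α s))).deriv
  have dc1 : deriv (fun a : ℝ => cos ((k:ℝ)*a + (l:ℝ)*x₂)) x₁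
      = -sin ((k:ℝ)*x₁ + (l:ℝ)*x₂) * (k:ℝ) := (hA.cos).deriv
  have ds1 : deriv (fun a : ℝ => sin ((k:ℝ)*a + (l:ℝ)*x₂)) x₁
      = cos ((k:ℝ)*x₁ + (l:ℝ)*x₂) * (k:ℝ) := (hA.sin).deriv
  have dc2 : deriv (fun b : ℝ => cos ((k:ℝ)*x₁ + (l:ℝ)*b)) x₂
      = -sin ((k:ℝ)*x₁ + (l:ℝ)*x₂) * (l:ℝ) := (hB.cos).deriv
  have ds2 : deriv (fun b : ℝ => sin ((k:ℝ)*x₁ + (l:ℝ)*b)) x₂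
      = cos ((k:ℝ)*x₁ + (l:ℝ)*x₂) * (l:ℝ) := (hB.sin).deriv
  have d30 : deriv (fun σ : ℝ => cos (α σ)) s = -sin (α s) * deriv α s :=
    (hαs.cos).deriv
  have dsα : deriv (fun σ : ℝ => sin (α σ)) s = cos (α s) * deriv α s :=
    (hαs.sin).deriv
  have d31 : deriv (fun σ : ℝ => sin (α σ) * cos ((k:ℝ)*x₁ + (l:ℝ)*x₂)) s
      = cos (α s) * deriv α s * cos ((k:ℝ)*x₁ + (l:ℝ)*x₂) :=
    ((hαs.sin).mul_const (cos ((k:ℝ)*x₁ + (l:ℝ)*x₂))).deriv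
  have d32 : deriv (fun σ : ℝ => sin (α σ) * sin ((k:ℝ)*x₁ + (l:ℝ)*x₂)) s
      = cos (α s) * deriv α s * sin ((k:ℝ)*x₁ + (l:ℝ)*x₂) :=
    ((hαs.sin).mul_const (sin ((k:ℝ)*x₁ + (l:ℝ)*x₂))).deriv
  have hu' : ∀ i m, u i m =
      (![![0, -(k:ℝ) * sin (α s) * sin ((k:ℝ)*x₁ + (l:ℝ)*x₂) / (R * cos s),
             (k:ℝ) * sin (α s) * cos ((k:ℝ)*x₁ + (l:ℝ)*x₂) / (R * cos s)],
         ![0, -(l:ℝ) * sin (α s) * sin ((k:ℝ)*x₁ + (l:ℝ)*x₂) / (R * sin s),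
             (l:ℝ) * sin (α s) * cos ((k:ℝ)*x₁ + (l:ℝ)*x₂) / (R * sin s)],
         ![-sin (α s) * deriv α s / R,
             cos (α s) * deriv α s * cos ((k:ℝ)*x₁ + (l:ℝ)*x₂) / R,
             cos (α s) * deriv α s * sin ((k:ℝ)*x₁ + (l:ℝ)*x₂) / R]] : Fin 3 → Fin 3 → ℝ) i m := by
    subst hΦ hu
    intro i m
    fin_cases i <;> fin_cases m <;>
      · simp [d10, d11, d20, d21, dc1, ds1, dc2, ds2, d30, dsα, d31, d32]
        try ring
  have hR' : R ≠ 0 := ne_of_gt hR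
  have hsin' : sin s ≠ 0 := ne_of_gt hsin
  have hcos' : cos s ≠ 0 := ne_of_gt hcos
  refine ⟨?_, ?_, ?_⟩ <;>
  · funext i
    fin_cases i <;>
      simp only [hG, Matrix.mulVec, dotProduct, Fin.sum_univ_three] <;>
      simp [hu'] <;>
      field_simp <;>
      ring_nf <;>
      try simp only [sin_sq] <;>
      try ring
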